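/- Let β > 0 and 0 < ω < β. Every continuously differentiable solution (u, v) : ℝ → ℝ² of the Hamiltonian system u'(x) = −(ω+β)v(x) − v(x)³, v'(x) = (ω−β)u(x) + u(x)³ with initial condition u(0) = √(2(β−ω)), v(0) = 0 satisfies u(x)² > v(x)² for all x ∈ ℝ. -/

import Mathlib

/-- Every `C¹` solution of the Hamiltonian system `u' = −(ω+β)v − v³`, `v' = (ω−β)u + u³`
with initial condition `u(0) = √(2(β−ω))`, `v(0) = 0` satisfies `u(x)² > v(x)²` for all `x`. -/
theorem orbit_confined (β ω : ℝ) (hβ : 0 < β) (hω : 0 < ω) (hωβ : ω < β)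
    (u v : ℝ → ℝ) (hu : ContDiff ℝ 1 u) (hv : ContDiff ℝ 1 v)
    (hu' : ∀ x : ℝ, deriv u x = -(ω + β) * v x - (v x) ^ 3)
    (hv' : ∀ x : ℝ, deriv v x = (ω - β) * u x + (u x) ^ 3)
    (hu0 : u 0 = Real.sqrt (2 * (β - ω))) (hv0 : v 0 = 0) :
    ∀ x : ℝ, (v x) ^ 2 < (u x) ^ 2 := by
  have du : Differentiable ℝ u := hu.differentiable one_ne_zero
  have dv : Differentiable ℝ v := hv.differentiable one_ne_zero
  have hU : ∀ x, HasDerivAt u (-(ω + β) * v x - (v x) ^ 3) x := fun x => by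
    rw [← hu' x]; exact (du x).hasDerivAt
  have hV : ∀ x, HasDerivAt v ((ω - β) * u x + (u x) ^ 3) x := fun x => by
    rw [← hv' x]; exact (dv x).hasDerivAt
  set H : ℝ → ℝ := fun x => ((u x) ^ 4 + (v x) ^ 4) / 4
      + β / 2 * ((v x) ^ 2 - (u x) ^ 2) + ω / 2 * ((u x) ^ 2 + (v x) ^ 2) with hHdef
  have hH : ∀ x, HasDerivAt H 0 x := by
    intro x
    have h := ((((hU x).pow 4).add ((hV x).pow 4)).div_const 4).add
      ((((hV x).pow 2).sub ((hU x).pow 2)).const_mul (β / 2)) |>.add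
      ((((hU x).pow 2).add ((hV x).pow 2)).const_mul (ω / 2))
    exact h.congr_deriv (by
      simp only [show (4:ℕ) - 1 = 3 from rfl, show (2:ℕ) - 1 = 1 from rfl, Nat.cast_ofNat]; ring)
  have hHdiff : Differentiable ℝ H := fun x => (hH x).differentiableAt
  have hHderiv : ∀ x, deriv H x = 0 := fun x => (hH x).deriv
  have hu0sq : (u 0) ^ 2 = 2 * (β - ω) := by
    rw [hu0, sq, Real.mul_self_sqrt (by linarith)]
  have hH0 : H 0 = 0 := by
    have h4 : (u 0) ^ 4 = (2 * (β - ω)) ^ 2 := by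
      rw [show (u 0) ^ 4 = ((u 0) ^ 2) ^ 2 by ring, hu0sq]
    simp only [hHdef, hv0, h4]
    ring_nf
    nlinarith [hu0sq]
  have hHx : ∀ x, H x = 0 := by
    intro x
    have := is_const_of_deriv_eq_zero hHdiff hHderiv x 0
    rw [this, hH0]
  have hcons : ∀ x, ((u x) ^ 4 + (v x) ^ 4) / 4
      + β / 2 * ((v x) ^ 2 - (u x) ^ 2) + ω / 2 * ((u x) ^ 2 + (v x) ^ 2) = 0 :=
    fun x => hHx x
  set E : ℝ → ℝ := fun x => (u x) ^ 2 + (v x) ^ 2 with hEdef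
  have hEnn : ∀ x, 0 ≤ E x := fun x => by simp only [hEdef]; positivity
  have hE4β : ∀ x, E x ≤ 4 * β := by
    intro x
    simp only [hEdef]
    by_contra h
    push_neg at h
    have h1 := hcons x
    have hS : 0 < u x ^ 2 + v x ^ 2 := by nlinarith
    have hprod := mul_pos hS (by linarith : 0 < u x ^ 2 + v x ^ 2 - 4 * β)
    nlinarith [sq_nonneg ((u x) ^ 2 - (v x) ^ 2), mul_nonneg hβ.le (sq_nonneg (v x)),
      mul_nonneg hω.le hS.le]
  have hE : ∀ x, HasDerivAt E
      (2 * u x ^ 1 * (-(ω + β) * v x - (v x) ^ 3) + 2 * v x ^ 1 * ((ω - β) * u x + (u x) ^ 3)) x :=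
    fun x => ((hU x).pow 2).add ((hV x).pow 2)
  have hE'lb : ∀ x, -(6 * β) * E x ≤
      2 * u x ^ 1 * (-(ω + β) * v x - (v x) ^ 3) + 2 * v x ^ 1 * ((ω - β) * u x + (u x) ^ 3) := by
    intro x
    have h4 : u x ^ 2 + v x ^ 2 ≤ 4 * β := by have := hE4β x; simpa [hEdef] using this
    simp only [hEdef]
    nlinarith [sq_nonneg ((u x) ^ 2 - (v x) ^ 2 + 2 * u x * v x),
      mul_nonneg hβ.le (sq_nonneg (u x - v x)),
      mul_nonneg (by positivity : (0:ℝ) ≤ u x ^ 2 + v x ^ 2) (by linarith : (0:ℝ) ≤ 4 * β - (u x ^ 2 + v x ^ 2)),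
      mul_nonneg hβ.le (by positivity : (0:ℝ) ≤ u x ^ 2 + v x ^ 2)]
  have hE'ub : ∀ x,
      2 * u x ^ 1 * (-(ω + β) * v x - (v x) ^ 3) + 2 * v x ^ 1 * ((ω - β) * u x + (u x) ^ 3)
        ≤ 6 * β * E x := by
    intro x
    have h4 : u x ^ 2 + v x ^ 2 ≤ 4 * β := by have := hE4β x; simpa [hEdef] using this
    simp only [hEdef]
    nlinarith [sq_nonneg ((u x) ^ 2 - (v x) ^ 2 - 2 * u x * v x),
      mul_nonneg hβ.le (sq_nonneg (u x + v x)),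
      mul_nonneg (by positivity : (0:ℝ) ≤ u x ^ 2 + v x ^ 2) (by linarith : (0:ℝ) ≤ 4 * β - (u x ^ 2 + v x ^ 2)),
      mul_nonneg hβ.le (by positivity : (0:ℝ) ≤ u x ^ 2 + v x ^ 2)]
  have hE0 : 0 < E 0 := by
    simp only [hEdef, hv0]
    nlinarith [hu0sq]
  have hexp : ∀ (c y : ℝ), HasDerivAt (fun t : ℝ => Real.exp (c * t))
      (Real.exp (c * y) * c) y := by
    intro c y
    simpa using ((hasDerivAt_id y).const_mul c).exp
  have hEpos : ∀ x, 0 < E x := by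
    intro x
    rcases le_or_gt 0 x with hx | hx
    · have hg : ∀ y, HasDerivAt (fun t => E t * Real.exp (6 * β * t))
          ((2 * u y ^ 1 * (-(ω + β) * v y - (v y) ^ 3)
            + 2 * v y ^ 1 * ((ω - β) * u y + (u y) ^ 3)) * Real.exp (6 * β * y)
            + E y * (Real.exp (6 * β * y) * (6 * β))) y :=
        fun y => (hE y).mul (hexp (6 * β) y)
      have hmono : Monotone (fun t => E t * Real.exp (6 * β * t)) := by
        apply monotone_of_deriv_nonneg (fun y => (hg y).differentiableAt)
        intro y
        rw [(hg y).deriv]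
        have h1 := hE'lb y
        have hex : 0 < Real.exp (6 * β * y) := Real.exp_pos _
        nlinarith [mul_le_mul_of_nonneg_right h1 hex.le]
      have hle := hmono hx
      simp only at hle
      have h0 : 0 < E 0 * Real.exp (6 * β * 0) := by positivity
      nlinarith [Real.exp_pos (6 * β * x), lt_of_lt_of_le h0 hle]
    · have hg : ∀ y, HasDerivAt (fun t => E t * Real.exp (-(6 * β) * t))
          ((2 * u y ^ 1 * (-(ω + β) * v y - (v y) ^ 3)
            + 2 * v y ^ 1 * ((ω - β) * u y + (u y) ^ 3)) * Real.exp (-(6 * β) * y)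
            + E y * (Real.exp (-(6 * β) * y) * (-(6 * β)))) y :=
        fun y => (hE y).mul (hexp (-(6 * β)) y)
      have hanti : Antitone (fun t => E t * Real.exp (-(6 * β) * t)) := by
        apply antitone_of_deriv_nonpos (fun y => (hg y).differentiableAt)
        intro y
        rw [(hg y).deriv]
        have h1 := hE'ub y
        have hex : 0 < Real.exp (-(6 * β) * y) := Real.exp_pos _
        nlinarith [mul_le_mul_of_nonneg_right h1 hex.le]
      have hle := hanti hx.le
      simp only at hle
      have h0 : 0 < E 0 * Real.exp (-(6 * β) * 0) := by positivity
      nlinarith [Real.exp_pos (-(6 * β) * x), lt_of_lt_of_le h0 hle]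
  intro x
  have h1 := hcons x
  have h2 := hEpos x
  simp only [hEdef] at h2
  nlinarith [mul_pos hω h2, sq_nonneg ((u x) ^ 2), sq_nonneg ((v x) ^ 2)]
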